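/- Let D be a central division algebra of dimension d² over a local or global field F and g a regular semisimple element of GL_n(D). Then the reduced characteristic polynomial P_g of g is d-compatible: every irreducible factor of P_g in F[X] has degree divisible by d. -/

import Mathlib

open Polynomial

section FactF

variable {F : Type*} [Field F]

/-- If `Q` is a nonconstant divisor of the characteristic polynomial of a matrix `A`,
then `det (Q(A)) = 0`. -/
lemma det_aeval_eq_zero_of_dvd_charpoly {ι : Type*} [Fintype ι] [DecidableEq ι]
    (A : Matrix ι ι F) {Q : F[X]} (hQ : 0 < Q.natDegree) (hdvd : Q ∣ A.charpoly) :
    Matrix.det (aeval A Q) = 0 := by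
  classical
  set E := AlgebraicClosure F
  set f : F →+* E := algebraMap F E with hf
  have hinj : Function.Injective f := f.injective
  set Af : Matrix ι ι E := A.map f with hAf
  -- transfer the evaluation over `E`
  have hmap : (aeval A Q).map f = aeval Af (Q.map f) := by
    have h1 : (Algebra.ofId F E).mapMatrix (aeval A Q)
        = aeval ((Algebra.ofId F E).mapMatrix A) Q :=
      (aeval_algHom_apply (Algebra.ofId F E).mapMatrix A Q).symm
    have h2 : ((Algebra.ofId F E).mapMatrix A : Matrix ι ι E) = Af := rfl
    have h3 : ((Algebra.ofId F E).mapMatrix (aeval A Q) : Matrix ι ι E) = (aeval A Q).map f := rfl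
    rw [h3, h2] at h1
    rw [h1, ← Polynomial.aeval_map_algebraMap E Af Q]
  -- a root of `Q.map f`
  have hQdeg : (Q.map f).natDegree = Q.natDegree := Q.natDegree_map f
  have hQdeg' : (Q.map f).degree ≠ 0 := by
    have : 0 < (Q.map f).natDegree := by omega
    exact ne_of_gt (Polynomial.natDegree_pos_iff_degree_pos.mp this)
  obtain ⟨μ, hμ⟩ := IsAlgClosed.exists_root (Q.map f) hQdeg'
  obtain ⟨T, hT⟩ : (X - C μ) ∣ Q.map f := Polynomial.dvd_iff_isRoot.mpr hμ
  -- μ is a root of the charpoly of Af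
  have hdvd2 : Q.map f ∣ Af.charpoly := by
    rw [hAf, Matrix.charpoly_map]
    exact Polynomial.map_dvd f hdvd
  have hroot : Af.charpoly.IsRoot μ := by
    obtain ⟨c, hc⟩ := hdvd2
    simp [hc, Polynomial.IsRoot, Polynomial.eval_mul, hμ.eq_zero]
  -- det of (Af - μ) is zero
  have hdet1 : Matrix.det (Af - algebraMap E (Matrix ι ι E) μ) = 0 := by
    have heval : Polynomial.eval μ Af.charpoly
        = Matrix.det (Matrix.scalar ι μ - Af) := by
      rw [Matrix.charpoly, _root_.eval_det, Matrix.matPolyEquiv_charmatrix]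
      congr 1
      rw [Polynomial.eval_sub, Polynomial.eval_X, Polynomial.eval_C]
    have hscalar : algebraMap E (Matrix ι ι E) μ = Matrix.scalar ι μ := rfl
    have : Af - algebraMap E (Matrix ι ι E) μ = -(Matrix.scalar ι μ - Af) := by
      rw [hscalar]; exact (neg_sub _ _).symm
    rw [this, Matrix.det_neg, heval.symm, hroot.eq_zero, mul_zero]
  -- conclude
  have hdetE : Matrix.det (aeval Af (Q.map f)) = 0 := by
    rw [hT, map_mul, Matrix.det_mul]
    have : (aeval Af (X - C μ) : Matrix ι ι E) = Af - algebraMap E (Matrix ι ι E) μ := by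
      rw [map_sub, aeval_X, aeval_C]
    rw [this, hdet1, zero_mul]
  have := (RingHom.map_det f (aeval A Q)).symm
  rw [RingHom.mapMatrix_apply, hmap, hdetE] at this
  exact hinj (by simpa using this.symm)

/-- If `Q` is a nonconstant divisor of the characteristic polynomial of an endomorphism `L`,
then `Q(L)` has nontrivial kernel. -/
lemma exists_ne_zero_aeval_eq_zero {V : Type*} [AddCommGroup V] [Module F V]
    [FiniteDimensional F V] (L : Module.End F V) {Q : F[X]}
    (hQ : 0 < Q.natDegree) (hdvd : Q ∣ LinearMap.charpoly L) :
    ∃ x : V, x ≠ 0 ∧ aeval L Q x = 0 := by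
  classical
  let b := Module.Free.chooseBasis F V
  set A := LinearMap.toMatrix b b L with hA
  have hchar : LinearMap.charpoly L = A.charpoly := (LinearMap.charpoly_toMatrix L b).symm
  have hdet : Matrix.det (aeval A Q) = 0 :=
    det_aeval_eq_zero_of_dvd_charpoly A hQ (hchar ▸ hdvd)
  have hker : LinearMap.ker (aeval L Q) ≠ ⊥ := by
    intro hbot
    have hu : IsUnit (aeval L Q) := (LinearMap.isUnit_iff_ker_eq_bot _).mpr hbot
    have htrans : LinearMap.toMatrixAlgEquiv b (aeval L Q) = aeval A Q := by
      have := aeval_algHom_apply (LinearMap.toMatrixAlgEquiv b).toAlgHom L Q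
      simpa [LinearMap.toMatrixAlgEquiv, hA] using this.symm
    have hu2 : IsUnit (aeval A Q) := htrans ▸ hu.map (LinearMap.toMatrixAlgEquiv b)
    have := (Matrix.isUnit_iff_isUnit_det _).mp hu2
    rw [hdet] at this
    exact this.ne_zero rfl
  obtain ⟨x, hx, hx0⟩ := Submodule.exists_mem_ne_zero_of_ne_bot hker
  exact ⟨x, hx0, LinearMap.mem_ker.mp hx⟩

/-- A monic polynomial all of whose monic irreducible factors equal `Q` is a power of `Q`. -/
lemma eq_pow_of_forall_monic_irreducible_factor_eq {Q : F[X]} (hQ : Irreducible Q) :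
    ∀ (m : ℕ) (c : F[X]), c.natDegree ≤ m → c.Monic →
      (∀ R : F[X], R.Monic → Irreducible R → R ∣ c → R = Q) → ∃ s, c = Q ^ s := by
  intro m
  induction m with
  | zero =>
    intro c hdeg hmonic _
    exact ⟨0, by rw [pow_zero, ← hmonic.natDegree_eq_zero]; omega⟩
  | succ m ih =>
    intro c hdeg hmonic hall
    by_cases hc1 : c = 1
    · exact ⟨0, by rw [pow_zero, hc1]⟩
    have hc0 : c ≠ 0 := hmonic.ne_zero
    have hcu : ¬IsUnit c := by rwa [hmonic.isUnit_iff]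
    obtain ⟨R₀, hR₀irr, hR₀dvd⟩ := WfDvdMonoid.exists_irreducible_factor hcu hc0
    have hR₀0 : R₀ ≠ 0 := hR₀irr.ne_zero
    set R : F[X] := R₀ * C R₀.leadingCoeff⁻¹ with hR
    have hRmonic : R.Monic := Polynomial.monic_mul_leadingCoeff_inv hR₀0
    have hu : IsUnit (C R₀.leadingCoeff⁻¹ : F[X]) :=
      Polynomial.isUnit_C.mpr
        (isUnit_iff_ne_zero.mpr (inv_ne_zero (Polynomial.leadingCoeff_ne_zero.mpr hR₀0)))
    have hassoc : Associated R₀ R := ⟨hu.unit, by simp [hR]⟩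
    have hRirr : Irreducible R := hassoc.irreducible hR₀irr
    have hRdvd : R ∣ c := hassoc.symm.dvd.trans hR₀dvd
    have hRQ : R = Q := hall R hRmonic hRirr hRdvd
    obtain ⟨c', hc'⟩ := hRQ ▸ hRdvd
    have hQmonic : Q.Monic := hRQ ▸ hRmonic
    have hc'monic : c'.Monic := hQmonic.of_mul_monic_left (hc' ▸ hmonic)
    have hQdeg : 0 < Q.natDegree := hQ.natDegree_pos
    have hdegs : c.natDegree = Q.natDegree + c'.natDegree := by
      rw [hc', Polynomial.natDegree_mul hQmonic.ne_zero hc'monic.ne_zero]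
    obtain ⟨s, hs⟩ := ih c' (by omega) hc'monic
      (fun R' hRm' hRi' hRd' => hall R' hRm' hRi' (hRd'.trans (Dvd.intro_left Q hc'.symm)))
    exact ⟨s + 1, by rw [hc', hs, pow_succ, mul_comm]⟩

/-- If `Q^k` kills an endomorphism, the charpoly is a power of `Q`. -/
lemma charpoly_eq_pow_of_aeval_pow_eq_zero {V : Type*} [AddCommGroup V] [Module F V]
    [FiniteDimensional F V] (L : Module.End F V) {Q : F[X]} (hm : Q.Monic)
    (hirr : Irreducible Q) {k : ℕ} (hk : aeval L (Q ^ k) = 0) :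
    ∃ s, LinearMap.charpoly L = Q ^ s := by
  have key : ∀ R : F[X], R.Monic → Irreducible R → R ∣ LinearMap.charpoly L → R = Q := by
    intro R hRm hRirr hRdvd
    by_contra hne
    have hnd : ¬ R ∣ Q := by
      intro hdvd
      exact hne (Polynomial.eq_of_monic_of_associated hRm hm (hRirr.associated_of_dvd hirr hdvd))
    have hcop : IsCoprime R (Q ^ k) := (hRirr.coprime_iff_not_dvd.mpr hnd).pow_right
    obtain ⟨x, hx0, hx⟩ := exists_ne_zero_aeval_eq_zero L hRirr.natDegree_pos hRdvd
    obtain ⟨u, v, huv⟩ := hcop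
    have : x = 0 := by
      have h := congrArg (fun p : F[X] => aeval L p x) huv
      simpa [map_add, map_mul, Module.End.mul_apply, hx, hk] using h.symm
    exact hx0 this
  exact eq_pow_of_forall_monic_irreducible_factor_eq hirr
    (LinearMap.charpoly L).natDegree _ le_rfl (LinearMap.charpoly_monic L) key

/-- Evaluation of a polynomial at the restriction of an endomorphism. -/
lemma aeval_restrict_apply {V : Type*} [AddCommGroup V] [Module F V]
    (L : Module.End F V) {p : Submodule F V} (h : ∀ x ∈ p, L x ∈ p) (q : F[X]) (x : p) :
    ((aeval (L.restrict h) q x : p) : V) = aeval L q (x : V) := by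
  induction q using Polynomial.induction_on' with
  | add f g hf hg => simp [map_add, LinearMap.add_apply, hf, hg]
  | monomial k a =>
    rw [aeval_monomial, aeval_monomial, Module.End.mul_apply, Module.End.mul_apply,
      Module.algebraMap_end_apply, Module.algebraMap_end_apply, Module.End.pow_restrict,
      Submodule.coe_smul, LinearMap.restrict_coe_apply]

end FactF
set_option maxHeartbeats 1000000 in
/-- Let `D` be a central division algebra of dimension `d²` over `F` and `g` a regular
semisimple element of `GLₙ(D)`: `g` is invertible and its reduced characteristic polynomial
`P` (the monic polynomial with `P ^ (n·d)` equal to the characteristic polynomial of left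
multiplication by `g`) has simple roots, i.e. is separable.  Then `P` is `d`-compatible:
every irreducible factor of `P` in `F[X]` has degree divisible by `d`. -/
theorem stmt_6 {F D : Type*} [Field F] [DivisionRing D] [Algebra F D]
    [FiniteDimensional F D] [Algebra.IsCentral F D]
    (d : ℕ) (hd : 0 < d) (hdim : Module.finrank F D = d ^ 2)
    (n : ℕ) (hn : 0 < n)
    (g : Matrix (Fin n) (Fin n) D) (hg : IsUnit g)
    (P : F[X]) (hP : P.Monic) (hsep : P.Separable)
    (hPchar : P ^ (n * d) = (LinearMap.mulLeft F g).charpoly) :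
    ∀ Q : F[X], Irreducible Q → Q ∣ P → d ∣ Q.natDegree := by
  intro Q hQirr hQdvd
  classical
  -- Replace `Q` by its monic normalization `Q₀`.
  have hQne : Q ≠ 0 := hQirr.ne_zero
  set Q₀ : F[X] := normalize Q with hQ₀def
  have hQ₀monic : Q₀.Monic := Polynomial.monic_normalize hQne
  have hassoc : Associated Q Q₀ := associated_normalize Q
  have hQ₀irr : Irreducible Q₀ := hassoc.irreducible hQirr
  have hQ₀dvd : Q₀ ∣ P := hassoc.symm.dvd.trans hQdvd
  have hdegeq : Q₀.natDegree = Q.natDegree :=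
    (Polynomial.natDegree_eq_of_degree_eq
      (Polynomial.degree_eq_degree_of_associated hassoc)).symm
  suffices hfin : d ∣ Q₀.natDegree by rwa [hdegeq] at hfin
  -- Factor `P = Q₀ * P₁` with `Q₀ ∤ P₁` (separability).
  obtain ⟨P₁, hP₁⟩ := hQ₀dvd
  have hP₁monic : P₁.Monic := hQ₀monic.of_mul_monic_left (hP₁ ▸ hP)
  have hQ₀P₁ : ¬ Q₀ ∣ P₁ := by
    intro hdv
    obtain ⟨P₂, hP₂⟩ := hdv
    have hsq : Squarefree P := hsep.squarefree
    exact hQ₀irr.not_isUnit (hsq Q₀ ⟨P₂, by rw [hP₁, hP₂]; ring⟩)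
  set k := n * d with hkdef
  set L := LinearMap.mulLeft F g with hLdef
  have hcharL : LinearMap.charpoly L = Q₀ ^ k * P₁ ^ k := by
    rw [← hPchar, hP₁, mul_pow]
  set fQ : F[X] := Q₀ ^ k with hfQdef
  set fP : F[X] := P₁ ^ k with hfPdef
  have hcop0 : IsCoprime Q₀ P₁ := hQ₀irr.coprime_iff_not_dvd.mpr hQ₀P₁
  have hcop : IsCoprime fQ fP := hcop0.pow
  have haeval0 : aeval L (fQ * fP) = 0 := by
    have h1 : fQ * fP = P ^ k := by rw [hfQdef, hfPdef, ← mul_pow, ← hP₁]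
    rw [h1, hPchar]
    exact LinearMap.aeval_self_charpoly L
  set U := LinearMap.ker (aeval L fQ) with hUdef
  set U' := LinearMap.ker (aeval L fP) with hU'def
  have hcommL : ∀ q : F[X], (aeval L q) * L = L * (aeval L q) := by
    intro q
    have h1 : aeval L q * aeval L (X : F[X]) = aeval L (X : F[X]) * aeval L q := by
      rw [← map_mul, ← map_mul, mul_comm]
    simpa [aeval_X] using h1
  have hUinv : ∀ x ∈ U, L x ∈ U := by
    intro x hx
    have h1 : aeval L fQ (L x) = L (aeval L fQ x) := by
      have h2 := congrArg (fun T : Module.End F (Matrix (Fin n) (Fin n) D) => T x) (hcommL fQ)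
      simpa [Module.End.mul_apply] using h2
    rw [hUdef, LinearMap.mem_ker] at hx ⊢
    rw [h1, hx, map_zero]
  have hU'inv : ∀ x ∈ U', L x ∈ U' := by
    intro x hx
    have h1 : aeval L fP (L x) = L (aeval L fP x) := by
      have h2 := congrArg (fun T : Module.End F (Matrix (Fin n) (Fin n) D) => T x) (hcommL fP)
      simpa [Module.End.mul_apply] using h2
    rw [hU'def, LinearMap.mem_ker] at hx ⊢
    rw [h1, hx, map_zero]
  have hdisj : Disjoint U U' := Polynomial.disjoint_ker_aeval_of_isCoprime L hcop
  have hsup : U ⊔ U' = ⊤ := by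
    rw [hUdef, hU'def, Polynomial.sup_ker_aeval_eq_ker_aeval_mul_of_coprime L hcop, haeval0]
    exact LinearMap.ker_zero
  have hcompl : IsCompl U U' := ⟨hdisj, codisjoint_iff.mpr hsup⟩
  set e := Submodule.prodEquivOfIsCompl U U' hcompl with hedef
  set L₁ := L.restrict hUinv with hL₁
  set L₂ := L.restrict hU'inv with hL₂
  have hconj : e.conj (L₁.prodMap L₂) = L := by
    apply LinearMap.ext
    intro x
    obtain ⟨⟨u, u'⟩, rfl⟩ := e.surjective x
    rw [LinearEquiv.conj_apply_apply, LinearEquiv.symm_apply_apply,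
      Submodule.coe_prodEquivOfIsCompl', LinearMap.prodMap_apply,
      Submodule.coe_prodEquivOfIsCompl', map_add]
    rfl
  have hcharfac : LinearMap.charpoly L = LinearMap.charpoly L₁ * LinearMap.charpoly L₂ := by
    calc LinearMap.charpoly L = LinearMap.charpoly (e.conj (L₁.prodMap L₂)) := by rw [hconj]
    _ = LinearMap.charpoly (L₁.prodMap L₂) := e.charpoly_conj _
    _ = _ := LinearMap.charpoly_prodMap _ _
  have hL₁aeval : aeval L₁ (Q₀ ^ k) = 0 := by
    rw [← hfQdef]
    apply LinearMap.ext
    intro x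
    have h1 := aeval_restrict_apply L hUinv fQ x
    rw [← hL₁] at h1
    have h2 : aeval L fQ (x : Matrix (Fin n) (Fin n) D) = 0 := LinearMap.mem_ker.mp x.2
    have h3 : ((aeval L₁ fQ x : ↥U) : Matrix (Fin n) (Fin n) D) = 0 := by rw [h1, h2]
    exact Subtype.coe_injective (by simp [h3])
  obtain ⟨s₁, hs₁⟩ := charpoly_eq_pow_of_aeval_pow_eq_zero L₁ hQ₀monic hQ₀irr hL₁aeval
  have hnotdvd : ¬ Q₀ ∣ LinearMap.charpoly L₂ := by
    intro hdv
    obtain ⟨x, hx0, hx⟩ := exists_ne_zero_aeval_eq_zero L₂ hQ₀irr.natDegree_pos hdv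
    have h1 : aeval L Q₀ (x : Matrix (Fin n) (Fin n) D) = 0 := by
      have h2 := aeval_restrict_apply L hU'inv Q₀ x
      rw [← hL₂] at h2
      rw [← h2, hx]
      simp
    have h2 : aeval L fP (x : Matrix (Fin n) (Fin n) D) = 0 := LinearMap.mem_ker.mp x.2
    have hcop2 : IsCoprime Q₀ fP := hcop0.pow_right
    obtain ⟨u, v, huv⟩ := hcop2
    have hx00 : (x : Matrix (Fin n) (Fin n) D) = 0 := by
      have h := congrArg (fun p : F[X] => aeval L p (x : Matrix (Fin n) (Fin n) D)) huv
      simpa [map_add, map_mul, Module.End.mul_apply, h1, h2] using h.symm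
    exact hx0 (by exact Subtype.coe_injective (by simpa using hx00))
  have hQ₀ne : Q₀ ≠ 0 := hQ₀irr.ne_zero
  have hfac : Q₀ ^ s₁ * LinearMap.charpoly L₂ = Q₀ ^ k * P₁ ^ k := by
    rw [← hs₁, ← hcharfac, hcharL]
  have hs₁k : s₁ = k := by
    rcases Nat.lt_trichotomy s₁ k with hlt | heq | hgt
    · exfalso
      apply hnotdvd
      have hc : LinearMap.charpoly L₂ = Q₀ ^ (k - s₁) * P₁ ^ k := by
        apply mul_left_cancel₀ (pow_ne_zero s₁ hQ₀ne)
        rw [hfac, ← mul_assoc, ← pow_add]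
        congr 2
        omega
      rw [hc]
      exact Dvd.dvd.mul_right (dvd_pow_self Q₀ (by omega)) _
    · exact heq
    · exfalso
      have hc : Q₀ ^ (s₁ - k) * LinearMap.charpoly L₂ = P₁ ^ k := by
        apply mul_left_cancel₀ (pow_ne_zero k hQ₀ne)
        rw [← mul_assoc, ← pow_add, ← hfac]
        congr 2
        omega
      have hdv : Q₀ ∣ P₁ ^ k := by
        rw [← hc]
        exact (dvd_pow_self Q₀ (by omega)).mul_right _
      exact hQ₀P₁ ((UniqueFactorizationMonoid.irreducible_iff_prime.mp hQ₀irr).dvd_of_dvd_pow hdv)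
  have hfrU : Module.finrank F ↥U = k * Q₀.natDegree := by
    have h := LinearMap.charpoly_natDegree (f := L₁)
    rw [hs₁, hs₁k, Polynomial.natDegree_pow] at h
    exact h.symm
  -- Now identify `U` with `n` copies of a right `D`-vector space.
  have hlmul : ∀ b : Matrix (Fin n) (Fin n) D,
      LinearMap.mulLeft F b = Algebra.lmul F (Matrix (Fin n) (Fin n) D) b := by
    intro b
    ext x
    rw [LinearMap.mulLeft_apply, Algebra.coe_lmul_eq_mul, LinearMap.mul_apply']
  set a : Matrix (Fin n) (Fin n) D := aeval g fQ with hadef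
  have hmulleft : aeval L fQ = LinearMap.mulLeft F a := by
    rw [hLdef, hlmul g, hlmul a, hadef]
    exact aeval_algHom_apply (Algebra.lmul F (Matrix (Fin n) (Fin n) D)) g fQ
  have hUmem : ∀ x : Matrix (Fin n) (Fin n) D, x ∈ U ↔ a * x = 0 := by
    intro x
    rw [hUdef, LinearMap.mem_ker, hmulleft, LinearMap.mulLeft_apply]
  letI towerD : IsScalarTower F Dᵐᵒᵖ D := ⟨fun c b x => by
    rw [MulOpposite.smul_eq_mul_unop, MulOpposite.smul_eq_mul_unop, MulOpposite.unop_smul,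
      Algebra.smul_def, Algebra.smul_def, ← mul_assoc, ← Algebra.commutes c x, mul_assoc]⟩
  set μmap : (Fin n → D) →ₗ[Dᵐᵒᵖ] (Fin n → D) :=
    { toFun := fun v => a.mulVec v
      map_add' := fun v w => Matrix.mulVec_add a v w
      map_smul' := fun c v => by
        funext i
        simp only [RingHom.id_apply, Pi.smul_apply, MulOpposite.smul_eq_mul_unop,
          Matrix.mulVec, dotProduct, Finset.sum_mul, mul_assoc] } with hμdef
  set W := LinearMap.ker μmap with hWdef
  have hμapply : ∀ v : Fin n → D, μmap v = a.mulVec v := fun v => rfl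
  have hcol : ∀ x : Matrix (Fin n) (Fin n) D, x ∈ U ↔ ∀ j, (fun i => x i j) ∈ W := by
    intro x
    rw [hUmem]
    constructor
    · intro h j
      show μmap (fun i => x i j) = 0
      rw [hμapply]
      funext i
      have h2 := congrFun (congrFun h i) j
      simpa [Matrix.mul_apply, Matrix.mulVec, dotProduct] using h2
    · intro h
      funext i j
      have h2 : μmap (fun i => x i j) = 0 := LinearMap.mem_ker.mp (h j)
      rw [hμapply] at h2
      have h3 := congrFun h2 i
      simpa [Matrix.mul_apply, Matrix.mulVec, dotProduct] using h3
  letI : Module F ↥W := Submodule.module' W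
  let Φ : ↥U ≃ₗ[F] (Fin n → ↥W) :=
    { toFun := fun x j => ⟨fun i => (x : Matrix (Fin n) (Fin n) D) i j, (hcol x).mp x.2 j⟩
      map_add' := fun x y => by funext j; apply Subtype.ext; funext i; rfl
      map_smul' := fun c x => by funext j; apply Subtype.ext; funext i; rfl
      invFun := fun v => ⟨(fun i j => (v j : Fin n → D) i : Matrix (Fin n) (Fin n) D),
        (hcol _).mpr (fun j => (v j).2)⟩
      left_inv := fun x => Subtype.ext rfl
      right_inv := fun v => by funext j; apply Subtype.ext; rfl }
  haveI hWfd : FiniteDimensional F ↥W := FiniteDimensional.of_injective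
    ({ toFun := fun w => (w : Fin n → D)
       map_add' := fun w₁ w₂ => rfl
       map_smul' := fun c w => rfl } : ↥W →ₗ[F] (Fin n → D)) Subtype.val_injective
  have hfrEq : Module.finrank F ↥U = Module.finrank F (Fin n → ↥W) := Φ.finrank_eq
  have hfrPi : Module.finrank F (Fin n → ↥W) = n * Module.finrank F ↥W := by
    rw [Module.finrank_pi_fintype F, Finset.sum_const, Finset.card_univ, Fintype.card_fin,
      smul_eq_mul]
  have hfrW : Module.finrank F Dᵐᵒᵖ * Module.finrank Dᵐᵒᵖ ↥W = Module.finrank F ↥W :=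
    Module.finrank_mul_finrank F Dᵐᵒᵖ ↥W
  have hfrDop : Module.finrank F Dᵐᵒᵖ = d ^ 2 := by
    rw [← hdim]
    exact ((MulOpposite.opLinearEquiv F : D ≃ₗ[F] Dᵐᵒᵖ).finrank_eq).symm
  set s := Module.finrank Dᵐᵒᵖ ↥W with hsdef
  have hkey : n * (d * (d * s)) = n * (d * Q₀.natDegree) := by
    have h1 : Module.finrank F ↥U = n * (d ^ 2 * s) := by
      rw [hfrEq, hfrPi, ← hfrW, hfrDop]
    rw [hfrU, hkdef] at h1
    calc n * (d * (d * s)) = n * (d ^ 2 * s) := by ring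
    _ = n * d * Q₀.natDegree := h1.symm
    _ = n * (d * Q₀.natDegree) := by ring
  have h2 : d * (d * s) = d * Q₀.natDegree := Nat.eq_of_mul_eq_mul_left hn hkey
  have h3 : d * s = Q₀.natDegree := Nat.eq_of_mul_eq_mul_left hd h2
  exact ⟨s, h3.symm⟩
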